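/- Let a ∈ ℝⁿ, d ∈ ℝ with |d| ≥ ‖a‖ and d ≠ 0. Then the set S = {(x,y) ∈ ℝⁿ×ℝ : ‖x‖² ≤ y², aᵀx + dy ≤ 0} is convex; specifically, S equals the second-order cone {(x,y) : ‖x‖ ≤ −sign(d)·y}. -/
import Mathlib


open RealInnerProductSpace

theorem convex_case_second_order_cone {n : ℕ}
    (a : EuclideanSpace ℝ (Fin n)) (d : ℝ)
    (had : ‖a‖ < |d|)
    (S : Set (EuclideanSpace ℝ (Fin n) × ℝ))
    (hS : S = {p | ‖p.1‖ ^ 2 ≤ p.2 ^ 2 ∧ ⟪a, p.1⟫ + d * p.2 ≤ 0}) :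
    Convex ℝ S ∧
    S = {p : EuclideanSpace ℝ (Fin n) × ℝ |
      ‖p.1‖ ≤ -(if 0 < d then (1 : ℝ) else -1) * p.2} := by
  have hd0 : 0 < |d| := lt_of_le_of_lt (norm_nonneg a) had
  have hdne : d ≠ 0 := by
    intro h; rw [h] at hd0; simp at hd0
  have key : S = {p : EuclideanSpace ℝ (Fin n) × ℝ |
      ‖p.1‖ ≤ -(if 0 < d then (1 : ℝ) else -1) * p.2} := by
    rw [hS]; ext ⟨x, y⟩
    simp only [Set.mem_setOf_eq]
    have hax : ⟪a, x⟫ ≤ ‖a‖ * ‖x‖ := real_inner_le_norm a x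
    have hax' : -(‖a‖ * ‖x‖) ≤ ⟪a, x⟫ := neg_le_of_neg_le (by
      have := real_inner_le_norm a (-x)
      simpa [inner_neg_right] using this)
    by_cases hdpos : 0 < d
    · have hd' : ‖a‖ < d := by rwa [abs_of_pos hdpos] at had
      simp only [if_pos hdpos, neg_mul, one_mul]
      constructor
      · rintro ⟨h1, h2⟩
        have hxy : ‖x‖ ≤ |y| := by
          nlinarith [sq_abs y, norm_nonneg x, abs_nonneg y]
        rcases le_or_gt y 0 with hy | hy
        · rwa [abs_of_nonpos hy] at hxy
        · exfalso
          rw [abs_of_pos hy] at hxy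
          nlinarith [norm_nonneg x, norm_nonneg a]
      · intro h
        have hy : y ≤ 0 := by nlinarith [norm_nonneg x]
        constructor
        · nlinarith [norm_nonneg x]
        · nlinarith [norm_nonneg a, norm_nonneg x]
    · have hdneg : d < 0 := lt_of_le_of_ne (not_lt.mp hdpos) hdne
      have hd' : ‖a‖ < -d := by rwa [abs_of_neg hdneg] at had
      simp only [if_neg hdpos, neg_neg, one_mul]
      constructor
      · rintro ⟨h1, h2⟩
        have hxy : ‖x‖ ≤ |y| := by
          nlinarith [sq_abs y, norm_nonneg x, abs_nonneg y]
        rcases le_or_gt y 0 with hy | hy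
        · rw [abs_of_nonpos hy] at hxy
          rcases eq_or_lt_of_le hy with rfl | hy'
          · have hx0 : ‖x‖ ≤ 0 := by linarith [hxy]
            linarith
          · exfalso
            nlinarith [norm_nonneg x, norm_nonneg a]
        · rwa [abs_of_pos hy] at hxy
      · intro h
        have hy : 0 ≤ y := le_trans (norm_nonneg x) h
        constructor
        · nlinarith [norm_nonneg x]
        · nlinarith [norm_nonneg a, norm_nonneg x]
  refine ⟨?_, key⟩
  rw [key]
  set s : ℝ := -(if 0 < d then (1 : ℝ) else -1) with hs
  intro p hp q hq α β hα hβ hαβ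
  simp only [Set.mem_setOf_eq] at hp hq ⊢
  have h1 : ‖(α • p + β • q).1‖ ≤ α * ‖p.1‖ + β * ‖q.1‖ := by
    calc ‖(α • p + β • q).1‖ = ‖α • p.1 + β • q.1‖ := rfl
      _ ≤ ‖α • p.1‖ + ‖β • q.1‖ := norm_add_le _ _
      _ = α * ‖p.1‖ + β * ‖q.1‖ := by
          rw [norm_smul, norm_smul, Real.norm_eq_abs, Real.norm_eq_abs,
            abs_of_nonneg hα, abs_of_nonneg hβ]
  have h2 : (α • p + β • q).2 = α * p.2 + β * q.2 := rfl
  rw [h2]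
  have := mul_le_mul_of_nonneg_left hp hα
  have := mul_le_mul_of_nonneg_left hq hβ
  nlinarith [this]
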